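/- arXiv:0710.0442 — 2 statements merged into one kernel-verified Lean document; each statement's English description precedes it below -/
import Mathlib

section
/- Let I = {1,…,κ} with κ ≥ 2, and for each i ∈ I let A_i ∈ ℝ^{2×2} be invertible with ‖A_i‖ < 1. Suppose there exist θ ∈ S¹ and 0 < β < π/2 such that A_i(cl X(θ,β)) ⊂ X(θ,β) and A_iᵀ(cl X(θ,β)) ⊂ X(θ,β) for every i ∈ I. Then for every finite word 𝚒 and every x ∈ X(θ,β), the unoriented angle between the line spanned by A_𝚒(θ₁(A_𝚒)) and the line spanned by A_𝚒 x is at most (π/(2·cos β))·α₂(A_𝚒)/α₁(A_𝚒). -/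
open MeasureTheory Filter Matrix Real Set

noncomputable section

abbrev E2 := EuclideanSpace ℝ (Fin 2)

noncomputable def mLin (A : Matrix (Fin 2) (Fin 2) ℝ) : E2 →L[ℝ] E2 :=
  LinearMap.toContinuousLinearMap (Matrix.toEuclideanLin A)

/-- largest singular value = operator norm -/
noncomputable def a1 (A : Matrix (Fin 2) (Fin 2) ℝ) : ℝ := ‖mLin A‖

/-- smallest singular value -/
noncomputable def a2 (A : Matrix (Fin 2) (Fin 2) ℝ) : ℝ := |A.det| / a1 A

/-- product of the matrices along a finite word -/
noncomputable def wprod {κ : ℕ} (A : Fin κ → Matrix (Fin 2) (Fin 2) ℝ) (l : List (Fin κ)) :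
    Matrix (Fin 2) (Fin 2) ℝ := (l.map A).prod

/-- the cone X(θ,β) -/
def cone (θ : E2) (β : ℝ) : Set E2 :=
  {x | x ≠ 0 ∧ Real.cos (β / 2) * ‖x‖ < |(inner ℝ θ x : ℝ)|}

/-- unoriented angle between the lines spanned by two vectors -/
noncomputable def uangle (u v : E2) : ℝ :=
  Real.arccos (|(inner ℝ u v : ℝ)| / (‖u‖ * ‖v‖))

/-! ### auxiliary lemmas -/

lemma inner2 (x y : E2) : (inner ℝ x y : ℝ) = x 0 * y 0 + x 1 * y 1 := by
  simp [PiLp.inner_apply, Fin.sum_univ_two, RCLike.inner_apply, conj_trivial]; ring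

lemma normsq2 (x : E2) : ‖x‖ ^ 2 = x 0 ^ 2 + x 1 ^ 2 := by
  rw [← real_inner_self_eq_norm_sq, inner2]; ring

def perpA (e : E2) : E2 := (WithLp.equiv 2 (Fin 2 → ℝ)).symm ![-(e 1), e 0]

lemma perp0 (e : E2) : perpA e 0 = -(e 1) := rfl
lemma perp1 (e : E2) : perpA e 1 = e 0 := rfl

lemma ext2 {x y : E2} (h0 : x 0 = y 0) (h1 : x 1 = y 1) : x = y := by
  have h : ‖x - y‖ ^ 2 = 0 := by
    rw [normsq2]
    simp [PiLp.sub_apply, h0, h1]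
  have := pow_eq_zero_iff (n := 2) (by norm_num) |>.1 h
  rwa [norm_sub_eq_zero_iff] at this

lemma tEL_apply2 (M : Matrix (Fin 2) (Fin 2) ℝ) (x : E2) (i : Fin 2) :
    Matrix.toEuclideanLin M x i = M i 0 * x 0 + M i 1 * x 1 := by
  fin_cases i <;> simp [Matrix.toEuclideanLin_apply, Matrix.mulVec, dotProduct, Fin.sum_univ_two]

lemma tEL_mul (M N : Matrix (Fin 2) (Fin 2) ℝ) (x : E2) :
    Matrix.toEuclideanLin (M * N) x = Matrix.toEuclideanLin M (Matrix.toEuclideanLin N x) := by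
  refine ext2 ?_ ?_ <;>
  · simp [tEL_apply2, Matrix.mul_apply, Fin.sum_univ_two]

lemma adj2 (M : Matrix (Fin 2) (Fin 2) ℝ) (u z : E2) :
    (inner ℝ (Matrix.toEuclideanLin M u) z : ℝ) = inner ℝ u (Matrix.toEuclideanLin Mᵀ z) := by
  simp [inner2, tEL_apply2, Matrix.transpose_apply]; ring

lemma lagrange2 (u z : E2) :
    (inner ℝ u z : ℝ) ^ 2 + (u 0 * z 1 - u 1 * z 0) ^ 2 = ‖u‖ ^ 2 * ‖z‖ ^ 2 := by
  rw [inner2, normsq2, normsq2]; ring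

lemma cross_map2 (M : Matrix (Fin 2) (Fin 2) ℝ) (u z : E2) :
    (Matrix.toEuclideanLin M u) 0 * (Matrix.toEuclideanLin M z) 1 -
      (Matrix.toEuclideanLin M u) 1 * (Matrix.toEuclideanLin M z) 0 =
      M.det * (u 0 * z 1 - u 1 * z 0) := by
  simp [tEL_apply2, Matrix.det_fin_two]; ring

lemma inj2 (M : Matrix (Fin 2) (Fin 2) ℝ) (hM : M.det ≠ 0) (z : E2)
    (h : Matrix.toEuclideanLin M z = 0) : z = 0 := by
  have h0 : M 0 0 * z 0 + M 0 1 * z 1 = 0 := by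
    have := congrArg (fun q : E2 => q 0) h; simpa [tEL_apply2] using this
  have h1 : M 1 0 * z 0 + M 1 1 * z 1 = 0 := by
    have := congrArg (fun q : E2 => q 1) h; simpa [tEL_apply2] using this
  rw [Matrix.det_fin_two] at hM
  refine ext2 ?_ ?_ <;> simp only [PiLp.zero_apply]
  · have : z 0 * (M 0 0 * M 1 1 - M 0 1 * M 1 0) = 0 := by
      linear_combination M 1 1 * h0 - M 0 1 * h1
    exact (mul_eq_zero.1 this).resolve_right hM
  · have : z 1 * (M 0 0 * M 1 1 - M 0 1 * M 1 0) = 0 := by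
      linear_combination M 0 0 * h1 - M 1 0 * h0
    exact (mul_eq_zero.1 this).resolve_right hM

lemma smuladd_apply (a b : ℝ) (u t : E2) (i : Fin 2) :
    (a • u + b • t) i = a * u i + b * t i := rfl

lemma decomp2 (e : E2) (he : ‖e‖ = 1) (z : E2) :
    z = (inner ℝ e z : ℝ) • e + (inner ℝ (perpA e) z : ℝ) • perpA e := by
  have he2 : e 0 ^ 2 + e 1 ^ 2 = 1 := by rw [← normsq2, he]; norm_num
  refine ext2 ?_ ?_ <;> rw [smuladd_apply, inner2, inner2, perp0, perp1]
  · linear_combination (-(z 0)) * he2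
  · linear_combination (-(z 1)) * he2

lemma mem_closure_cone (θ : E2) (hθ : ‖θ‖ = 1) (β : ℝ) (hβ0 : 0 < β) (hβ1 : β < π / 2)
    (x : E2) (h : Real.cos (β / 2) * ‖x‖ ≤ |(inner ℝ θ x : ℝ)|) : x ∈ closure (cone θ β) := by
  have hcb1 : Real.cos (β / 2) < 1 := by
    calc Real.cos (β / 2) < Real.cos 0 := by
          apply Real.cos_lt_cos_of_nonneg_of_le_pi (le_refl 0) (by linarith [Real.pi_pos])
            (by linarith)
      _ = 1 := Real.cos_zero
  have hcb0 : 0 < Real.cos (β / 2) :=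
    Real.cos_pos_of_mem_Ioo ⟨by linarith [Real.pi_pos], by linarith⟩
  set σ : ℝ := if 0 ≤ (inner ℝ θ x : ℝ) then 1 else -1 with hσ
  have hσθ : σ * (inner ℝ θ x : ℝ) = |(inner ℝ θ x : ℝ)| := by
    rcases le_or_gt 0 (inner ℝ θ x : ℝ) with hc | hc
    · rw [hσ, if_pos hc, one_mul, abs_of_nonneg hc]
    · rw [hσ, if_neg (not_le.2 hc), abs_of_neg hc]; ring
  have hσ1 : |σ| = 1 := by
    rw [hσ]; split_ifs <;> norm_num
  refine mem_closure_of_tendsto (f := fun n : ℕ => x + ((1 : ℝ) / (n + 1)) • (σ • θ))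
    (b := atTop) ?_ ?_
  · have h1 : Tendsto (fun n : ℕ => ((1 : ℝ) / (n + 1))) atTop (nhds 0) :=
      tendsto_one_div_add_atTop_nhds_zero_nat
    have := h1.smul_const (σ • θ)
    rw [zero_smul] at this
    simpa using (tendsto_const_nhds (x := x)).add this
  · filter_upwards with n
    set ε : ℝ := (1 : ℝ) / (n + 1) with hε
    have hε0 : 0 < ε := by positivity
    have hin : (inner ℝ θ (x + ε • (σ • θ)) : ℝ) = (inner ℝ θ x : ℝ) + ε * σ := by
      rw [inner_add_right, real_inner_smul_right, real_inner_smul_right,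
        real_inner_self_eq_norm_sq, hθ]
      ring
    have habs : |(inner ℝ θ (x + ε • (σ • θ)) : ℝ)| = |(inner ℝ θ x : ℝ)| + ε := by
      rw [hin]
      rcases le_or_gt 0 (inner ℝ θ x : ℝ) with hc | hc
      · rw [hσ, if_pos hc] at *
        rw [abs_of_nonneg (by positivity), abs_of_nonneg hc]; ring
      · rw [hσ, if_neg (not_le.2 hc)] at *
        rw [abs_of_neg hc]
        rw [abs_of_nonpos (by linarith)]
        ring
    constructor
    · intro h0
      rw [h0] at habs
      simp only [inner_zero_right, abs_zero] at habs
      have := abs_nonneg (inner ℝ θ x : ℝ)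
      linarith
    · have hnb : ‖x + ε • (σ • θ)‖ ≤ ‖x‖ + ε := by
        calc ‖x + ε • (σ • θ)‖ ≤ ‖x‖ + ‖ε • (σ • θ)‖ := norm_add_le _ _
          _ = ‖x‖ + ε := by
              rw [norm_smul, norm_smul, hθ, Real.norm_eq_abs, Real.norm_eq_abs, hσ1,
                abs_of_pos hε0]; ring
      calc Real.cos (β / 2) * ‖x + ε • (σ • θ)‖ ≤ Real.cos (β / 2) * (‖x‖ + ε) := by
            apply mul_le_mul_of_nonneg_left hnb hcb0.le
        _ = Real.cos (β / 2) * ‖x‖ + Real.cos (β / 2) * ε := by ring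
        _ < |(inner ℝ θ x : ℝ)| + ε := by nlinarith
        _ = |(inner ℝ θ (x + ε • (σ • θ)) : ℝ)| := habs.symm

lemma arccos_le_aux {u : ℝ} (hu0 : 0 < u) (hu1 : u ≤ 1) :
    Real.arccos u ≤ Real.sqrt (1 - u ^ 2) / u := by
  have ht0 : 0 ≤ Real.arccos u := Real.arccos_nonneg u
  have htlt : Real.arccos u < π / 2 := Real.arccos_lt_pi_div_two.2 hu0
  rcases eq_or_lt_of_le ht0 with h0 | h0
  · rw [← h0]; positivity
  · have := Real.lt_tan h0 htlt
    rw [Real.tan_eq_sin_div_cos, Real.sin_arccos, Real.cos_arccos (by linarith) hu1] at this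
    exact this.le
-- extra aux lemmas to append before the theorem
lemma norm_eq_one_of_sq {x : E2} (h : ‖x‖ ^ 2 = 1) : ‖x‖ = 1 := by
  have := Real.sqrt_sq (norm_nonneg x)
  rw [h, Real.sqrt_one] at this; exact this.symm

lemma perp_norm (e : E2) (he : ‖e‖ = 1) : ‖perpA e‖ = 1 := by
  apply norm_eq_one_of_sq
  rw [normsq2, perp0, perp1]
  have : e 0 ^ 2 + e 1 ^ 2 = 1 := by rw [← normsq2, he]; norm_num
  linarith [this]

lemma inner_perp (e : E2) : (inner ℝ e (perpA e) : ℝ) = 0 := by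
  rw [inner2, perp0, perp1]; ring

lemma inner_combo (u t : E2) (hu : ‖u‖ = 1) (ht : ‖t‖ = 1) (hut : (inner ℝ u t : ℝ) = 0)
    (a b p q : ℝ) : (inner ℝ (a • u + b • t) (p • u + q • t) : ℝ) = a * p + b * q := by
  have hu2 : u 0 ^ 2 + u 1 ^ 2 = 1 := by rw [← normsq2, hu]; norm_num
  have ht2 : t 0 ^ 2 + t 1 ^ 2 = 1 := by rw [← normsq2, ht]; norm_num
  rw [inner2] at hut ⊢
  simp only [smuladd_apply]
  linear_combination a * p * hu2 + b * q * ht2 + (a * q + b * p) * hut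

lemma norm_combo (u t : E2) (hu : ‖u‖ = 1) (ht : ‖t‖ = 1) (hut : (inner ℝ u t : ℝ) = 0)
    (p q : ℝ) : ‖p • u + q • t‖ ^ 2 = p ^ 2 + q ^ 2 := by
  rw [← real_inner_self_eq_norm_sq, inner_combo u t hu ht hut p q p q]; ring

lemma absle (a b : ℝ) (h : a ^ 2 ≤ b ^ 2) (hb : 0 ≤ b) : |a| ≤ b := by
  calc |a| = Real.sqrt (a ^ 2) := (Real.sqrt_sq_eq_abs a).symm
    _ ≤ Real.sqrt (b ^ 2) := Real.sqrt_le_sqrt h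
    _ = b := Real.sqrt_sq hb
set_option maxHeartbeats 1600000 in
/-- Lemma 4.3(i): under (K1a) and (K1b), for every finite word `li` and every
`x ∈ X(θ,β)`, the unoriented angle between `A_li(θ₁(A_li))` and `A_li x` is at most
`(π / (2 cos β)) · α₂(A_li)/α₁(A_li)`. Here `v` ranges over the unit eigenvectors of
`(A_li)ᵀ A_li` with eigenvalue `α₁(A_li)²`. -/
theorem angle_within_cylinder (κ : ℕ) (hκ : 2 ≤ κ)
    (A : Fin κ → Matrix (Fin 2) (Fin 2) ℝ)
    (hinv : ∀ i, IsUnit (A i).det) (hnorm : ∀ i, a1 (A i) < 1)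
    (θ : E2) (hθ : ‖θ‖ = 1) (β : ℝ) (hβ : 0 < β) (hβ' : β < π / 2)
    (hK1a : ∀ i, ∀ x ∈ closure (cone θ β), x ≠ 0 → Matrix.toEuclideanLin (A i) x ∈ cone θ β)
    (hK1b : ∀ i, ∀ x ∈ closure (cone θ β), x ≠ 0 → Matrix.toEuclideanLin (A i)ᵀ x ∈ cone θ β) :
    ∀ li : List (Fin κ), li ≠ [] → ∀ x ∈ cone θ β, ∀ v : E2, ‖v‖ = 1 →
      Matrix.toEuclideanLin ((wprod A li)ᵀ * wprod A li) v = (a1 (wprod A li)) ^ 2 • v →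
      uangle (Matrix.toEuclideanLin (wprod A li) v) (Matrix.toEuclideanLin (wprod A li) x) ≤
        (π / (2 * Real.cos β)) * (a2 (wprod A li) / a1 (wprod A li)) := by
  intro li hli x hx v hv hev
  have hπ := Real.pi_gt_three
  have hcb0 : 0 < Real.cos (β / 2) :=
    Real.cos_pos_of_mem_Ioo ⟨by linarith, by linarith⟩
  have hcb1 : Real.cos (β / 2) < 1 := by
    calc Real.cos (β / 2) < Real.cos 0 :=
          Real.cos_lt_cos_of_nonneg_of_le_pi (le_refl 0) (by linarith) (by linarith)
      _ = 1 := Real.cos_zero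
  have hsb0 : 0 < Real.sin (β / 2) :=
    Real.sin_pos_of_pos_of_lt_pi (by linarith) (by linarith)
  have hcβ : 0 < Real.cos β := Real.cos_pos_of_mem_Ioo ⟨by linarith, hβ'⟩
  have hθ0 : θ ≠ 0 := by intro h; rw [h, norm_zero] at hθ; norm_num at hθ
  have hθcone : θ ∈ cone θ β := by
    refine ⟨hθ0, ?_⟩
    rw [real_inner_self_eq_norm_sq, hθ]
    norm_num
    simpa using hcb1
  -- cone mapping for products
  have wcons : ∀ (i : Fin κ) (l : List (Fin κ)), wprod A (i :: l) = A i * wprod A l := by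
    intro i l; simp [wprod]
  have wnil : wprod A ([] : List (Fin κ)) = 1 := by simp [wprod]
  have coneA : ∀ l : List (Fin κ), l ≠ [] → ∀ y, y ∈ closure (cone θ β) → y ≠ 0 →
      Matrix.toEuclideanLin (wprod A l) y ∈ cone θ β := by
    intro l
    induction l with
    | nil => intro h; exact absurd rfl h
    | cons i l ih =>
      intro _ y hy hy0
      rcases eq_or_ne l [] with rfl | hl
      · rw [wcons, wnil, mul_one]
        exact hK1a i y hy hy0
      · rw [wcons, tEL_mul]
        have h1 := ih hl y hy hy0
        exact hK1a i _ (subset_closure h1) h1.1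
  have coneAT : ∀ l : List (Fin κ), l ≠ [] → ∀ y, y ∈ closure (cone θ β) → y ≠ 0 →
      Matrix.toEuclideanLin (wprod A l)ᵀ y ∈ cone θ β := by
    intro l
    induction l with
    | nil => intro h; exact absurd rfl h
    | cons i l ih =>
      intro _ y hy hy0
      rcases eq_or_ne l [] with rfl | hl
      · rw [wcons, wnil, mul_one]
        exact hK1b i y hy hy0
      · rw [wcons, Matrix.transpose_mul, tEL_mul]
        have h1 := hK1b i y hy hy0
        exact ih hl _ (subset_closure h1) h1.1
  set B := wprod A li with hB
  have coneM : ∀ y, y ∈ closure (cone θ β) → y ≠ 0 →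
      Matrix.toEuclideanLin (Bᵀ * B) y ∈ cone θ β := by
    intro y hy hy0
    rw [tEL_mul]
    have h1 := coneA li hli y hy hy0
    exact coneAT li hli _ (subset_closure h1) h1.1
  -- determinants
  have hdetu : ∀ l : List (Fin κ), IsUnit (wprod A l).det := by
    intro l
    induction l with
    | nil => rw [wnil]; simp
    | cons i l ih => rw [wcons, Matrix.det_mul]; exact (hinv i).mul ih
  have hdet0 : B.det ≠ 0 := (hdetu li).ne_zero
  -- eigen set-up
  set lam := a1 B ^ 2 with hlam
  set w := perpA v with hwdef
  have hv2 : v 0 ^ 2 + v 1 ^ 2 = 1 := by rw [← normsq2, hv]; norm_num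
  have hwn : ‖w‖ = 1 := perp_norm v hv
  have hvw : (inner ℝ v w : ℝ) = 0 := inner_perp v
  have hdec : ∀ z : E2, z = (inner ℝ v z : ℝ) • v + (inner ℝ w z : ℝ) • w := fun z => decomp2 v hv z
  have hsymm : ∀ z y : E2, (inner ℝ (Matrix.toEuclideanLin (Bᵀ * B) z) y : ℝ) =
      inner ℝ (Matrix.toEuclideanLin B z) (Matrix.toEuclideanLin B y) := by
    intro z y
    rw [tEL_mul, adj2, Matrix.transpose_transpose]
  have hv0 : v ≠ 0 := by intro h; rw [h, norm_zero] at hv; norm_num at hv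
  have hw0 : w ≠ 0 := by intro h; rw [h, norm_zero] at hwn; norm_num at hwn
  have hTv2 : ‖Matrix.toEuclideanLin B v‖ ^ 2 = lam := by
    rw [← real_inner_self_eq_norm_sq, ← hsymm v v, hev, real_inner_smul_left,
      real_inner_self_eq_norm_sq, hv]
    norm_num
  have hTvne : Matrix.toEuclideanLin B v ≠ 0 := fun h => hv0 (inj2 B hdet0 v h)
  have hTwne : Matrix.toEuclideanLin B w ≠ 0 := fun h => hw0 (inj2 B hdet0 w h)
  have hlam0 : 0 < lam := by
    rw [← hTv2]; exact pow_pos (norm_pos_iff.2 hTvne) 2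
  have ha1nn : 0 ≤ a1 B := norm_nonneg (mLin B)
  have ha1 : 0 < a1 B := by
    rcases ha1nn.lt_or_eq with h | h
    · exact h
    · exfalso; rw [hlam, ← h] at hlam0; norm_num at hlam0
  have hTople : ∀ z : E2, ‖Matrix.toEuclideanLin B z‖ ≤ a1 B * ‖z‖ := by
    intro z
    have h := (mLin B).le_opNorm z
    have he : (mLin B) z = Matrix.toEuclideanLin B z := rfl
    rw [he] at h
    exact h
  set mu := ‖Matrix.toEuclideanLin B w‖ ^ 2 with hmu
  have hmu0 : 0 < mu := pow_pos (norm_pos_iff.2 hTwne) 2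
  have hgw : Matrix.toEuclideanLin (Bᵀ * B) w = mu • w := by
    have hd := hdec (Matrix.toEuclideanLin (Bᵀ * B) w)
    have h1 : (inner ℝ v (Matrix.toEuclideanLin (Bᵀ * B) w) : ℝ) = 0 := by
      rw [real_inner_comm, hsymm w v, real_inner_comm, ← hsymm v w, hev,
        real_inner_smul_left, hvw, mul_zero]
    have h2 : (inner ℝ w (Matrix.toEuclideanLin (Bᵀ * B) w) : ℝ) = mu := by
      rw [real_inner_comm, hsymm w w, real_inner_self_eq_norm_sq]
    rw [h1, h2, zero_smul, zero_add] at hd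
    exact hd
  have hmule : mu ≤ lam := by
    have h := hTople w
    rw [hwn, mul_one] at h
    rw [hmu, hlam]
    exact pow_le_pow_left₀ (norm_nonneg _) h 2
  have hTvTw : (inner ℝ (Matrix.toEuclideanLin B v) (Matrix.toEuclideanLin B w) : ℝ) = 0 := by
    rw [← hsymm v w, hev, real_inner_smul_left, hvw, mul_zero]
  have hTwTv : (inner ℝ (Matrix.toEuclideanLin B w) (Matrix.toEuclideanLin B v) : ℝ) = 0 := by
    rw [real_inner_comm]; exact hTvTw
  have hcvw : v 0 * w 1 - v 1 * w 0 = 1 := by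
    rw [hwdef, perp0, perp1]; linarith [hv2]
  have hdet2 : B.det ^ 2 = lam * mu := by
    have hl := lagrange2 (Matrix.toEuclideanLin B v) (Matrix.toEuclideanLin B w)
    rw [hTvTw, cross_map2, hcvw, hTv2, ← hmu] at hl
    linear_combination hl
  have ha2n : 0 ≤ a2 B := div_nonneg (abs_nonneg _) ha1nn
  have ha2sq : a2 B ^ 2 = mu := by
    have h : a2 B ^ 2 = B.det ^ 2 / a1 B ^ 2 := by
      rw [show a2 B = |B.det| / a1 B from rfl, div_pow, sq_abs]
    rw [h, hdet2, ← hlam, mul_comm, mul_div_assoc, div_self hlam0.ne', mul_one]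
  have hsqmu : Real.sqrt mu = a2 B := by rw [← ha2sq, Real.sqrt_sq ha2n]
  -- the boundary point
  set x0 : E2 := (Real.cos (β / 2)) • θ + (Real.sin (β / 2)) • perpA θ with hx0def
  have hθp : ‖perpA θ‖ = 1 := perp_norm θ hθ
  have hx0n : ‖x0‖ = 1 := by
    apply norm_eq_one_of_sq
    rw [norm_combo θ (perpA θ) hθ hθp (inner_perp θ) (Real.cos (β / 2)) (Real.sin (β / 2))]
    exact Real.cos_sq_add_sin_sq (β / 2)
  have hx00 : x0 ≠ 0 := by intro h; rw [h, norm_zero] at hx0n; norm_num at hx0n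
  have hθx0 : (inner ℝ θ x0 : ℝ) = (Real.cos (β / 2)) := by
    rw [hx0def, inner_add_right, real_inner_smul_right, real_inner_smul_right,
      real_inner_self_eq_norm_sq, hθ, inner_perp θ]
    norm_num
  have hx0cl : x0 ∈ closure (cone θ β) := by
    apply mem_closure_cone θ hθ β hβ hβ'
    rw [hθx0, hx0n, mul_one, abs_of_pos hcb0]
  -- mu < lam
  have hmulam : mu < lam := by
    rcases hmule.lt_or_eq with h | h
    · exact h
    · exfalso
      have hgall : Matrix.toEuclideanLin (Bᵀ * B) x0 = lam • x0 := by
        have hd := hdec x0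
        calc Matrix.toEuclideanLin (Bᵀ * B) x0
            = Matrix.toEuclideanLin (Bᵀ * B)
              ((inner ℝ v x0 : ℝ) • v + (inner ℝ w x0 : ℝ) • w) := by rw [← hd]
          _ = (inner ℝ v x0 : ℝ) • (lam • v) + (inner ℝ w x0 : ℝ) • (mu • w) := by
              rw [map_add, _root_.map_smul, _root_.map_smul, hev, hgw]
          _ = lam • ((inner ℝ v x0 : ℝ) • v + (inner ℝ w x0 : ℝ) • w) := by
              rw [h, smul_smul, smul_smul, smul_add, smul_smul, smul_smul,
                mul_comm lam, mul_comm lam]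
          _ = lam • x0 := by rw [← hd]
      have hc := coneM x0 hx0cl hx00
      rw [hgall] at hc
      obtain ⟨-, hlt⟩ := hc
      rw [real_inner_smul_right, hθx0, norm_smul, hx0n, Real.norm_eq_abs,
        abs_of_pos hlam0, mul_one, abs_mul, abs_of_pos hlam0, abs_of_pos hcb0] at hlt
      rw [mul_comm] at hlt
      exact lt_irrefl _ hlt
  -- θ in the (v,w) frame
  set c := (inner ℝ v θ : ℝ) with hcdef
  set bb := (inner ℝ w θ : ℝ) with hbbdef
  have hθd : θ = c • v + bb • w := hdec θ
  have hcb2 : c ^ 2 + bb ^ 2 = 1 := by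
    have h := norm_combo v w hv hwn hvw c bb
    rw [← hθd, hθ] at h
    rw [← h]; norm_num
  -- c ≠ 0
  have hcne : c ≠ 0 := by
    intro hc0
    rw [hc0, zero_smul, zero_add] at hθd
    have hbb2 : bb ^ 2 = 1 := by rw [hc0] at hcb2; linarith
    have hθ0c : θ 0 = bb * w 0 := by
      have := congrArg (fun z : E2 => z 0) hθd; simpa [PiLp.smul_apply, smul_eq_mul] using this
    have hθ1c : θ 1 = bb * w 1 := by
      have := congrArg (fun z : E2 => z 1) hθd; simpa [PiLp.smul_apply, smul_eq_mul] using this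
    have hx0d : x0 = (-((Real.sin (β / 2)) * bb)) • v + ((Real.cos (β / 2)) * bb) • w := by
      refine ext2 ?_ ?_ <;>
        rw [hx0def] <;>
        simp only [smuladd_apply, perp0, perp1] <;>
        rw [hθ0c, hθ1c] <;>
        simp only [hwdef, perp0, perp1] <;> ring
    have hgx0 : Matrix.toEuclideanLin (Bᵀ * B) x0 =
        (-((Real.sin (β / 2)) * bb) * lam) • v + ((Real.cos (β / 2)) * bb * mu) • w := by
      rw [hx0d, map_add, _root_.map_smul, _root_.map_smul, hev, hgw, smul_smul, smul_smul]
    have hc := coneM x0 hx0cl hx00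
    obtain ⟨-, hlt⟩ := hc
    rw [hgx0] at hlt
    have hip : (inner ℝ θ ((-((Real.sin (β / 2)) * bb) * lam) • v + ((Real.cos (β / 2)) * bb * mu) • w) : ℝ)
        = bb ^ 2 * ((Real.cos (β / 2)) * mu) := by
      rw [hθd,
        show (bb • w : E2) = (0 : ℝ) • v + bb • w by rw [zero_smul, zero_add],
        inner_combo v w hv hwn hvw]
      ring
    have hnp : ‖((-((Real.sin (β / 2)) * bb) * lam) • v + ((Real.cos (β / 2)) * bb * mu) • w)‖ ^ 2
        = ((Real.sin (β / 2)) * bb * lam) ^ 2 + ((Real.cos (β / 2)) * bb * mu) ^ 2 := by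
      rw [norm_combo v w hv hwn hvw]; ring
    rw [hip] at hlt
    have hlt2 : (Real.cos (β / 2)) * ‖((-((Real.sin (β / 2)) * bb) * lam) • v + ((Real.cos (β / 2)) * bb * mu) • w)‖ < (Real.cos (β / 2)) * mu := by
      calc (Real.cos (β / 2)) * ‖((-((Real.sin (β / 2)) * bb) * lam) • v + ((Real.cos (β / 2)) * bb * mu) • w)‖
          < |bb ^ 2 * ((Real.cos (β / 2)) * mu)| := hlt
        _ = (Real.cos (β / 2)) * mu := by rw [hbb2, one_mul, abs_of_pos (by positivity)]
    have hnn : 0 ≤ ‖((-((Real.sin (β / 2)) * bb) * lam) • v + ((Real.cos (β / 2)) * bb * mu) • w)‖ := norm_nonneg _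
    have hlt3 : ‖((-((Real.sin (β / 2)) * bb) * lam) • v + ((Real.cos (β / 2)) * bb * mu) • w)‖ < mu :=
      lt_of_mul_lt_mul_left hlt2 hcb0.le
    have hlt4 : ((Real.sin (β / 2)) * bb * lam) ^ 2 + ((Real.cos (β / 2)) * bb * mu) ^ 2 < mu ^ 2 := by
      rw [← hnp]; exact pow_lt_pow_left₀ hlt3 hnn (by norm_num)
    have hcs : (Real.cos (β / 2)) ^ 2 + (Real.sin (β / 2)) ^ 2 = 1 := by
      exact Real.cos_sq_add_sin_sq (β / 2)
    have e : ((Real.sin (β / 2)) * bb * lam) ^ 2 + ((Real.cos (β / 2)) * bb * mu) ^ 2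
        = ((Real.sin (β / 2)) * lam) ^ 2 + ((Real.cos (β / 2)) * mu) ^ 2 := by
      linear_combination ((Real.sin (β / 2)) ^ 2 * lam ^ 2 + (Real.cos (β / 2)) ^ 2 * mu ^ 2) * hbb2
    rw [e] at hlt4
    have e2 : ((Real.cos (β / 2)) * mu) ^ 2 = mu ^ 2 - ((Real.sin (β / 2)) * mu) ^ 2 := by
      linear_combination mu ^ 2 * hcs
    have hlt6 : ((Real.sin (β / 2)) * lam) ^ 2 < ((Real.sin (β / 2)) * mu) ^ 2 := by linarith
    have hlm : (Real.sin (β / 2)) * mu < (Real.sin (β / 2)) * lam :=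
      mul_lt_mul_of_pos_left hmulam hsb0
    have : ((Real.sin (β / 2)) * mu) ^ 2 < ((Real.sin (β / 2)) * lam) ^ 2 :=
      pow_lt_pow_left₀ hlm (by positivity) (by norm_num)
    linarith
  -- iterates of the symmetric map applied to θ
  set t := mu / lam with htdef
  have ht0 : 0 ≤ t := le_of_lt (div_pos hmu0 hlam0)
  have ht1 : t < 1 := (div_lt_one hlam0).2 hmulam
  have hmut : mu = t * lam := by rw [htdef, div_mul_cancel₀ _ hlam0.ne']
  set u : ℕ → E2 := fun n => (lam ^ n * c) • v + (mu ^ n * bb) • w with hudef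
  have hu0 : u 0 = θ := by
    simp only [hudef, pow_zero, one_mul]
    exact hθd.symm
  have hgu : ∀ n, Matrix.toEuclideanLin (Bᵀ * B) (u n) = u (n + 1) := by
    intro n
    simp only [hudef]
    rw [map_add, _root_.map_smul, _root_.map_smul, hev, hgw, smul_smul, smul_smul]
    congr 1
    · congr 1; ring
    · congr 1; ring
  have hucone : ∀ n : ℕ, u (n + 1) ∈ cone θ β := by
    intro n
    induction n with
    | zero =>
      rw [← hgu 0, hu0]
      exact coneM θ (subset_closure hθcone) hθ0
    | succ m ih =>
      rw [← hgu (m + 1)]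
      exact coneM _ (subset_closure ih) ih.1
  have key : ∀ n : ℕ, Real.cos (β / 2) ^ 2 * (c ^ 2 + (t ^ (n + 1)) ^ 2 * bb ^ 2)
      ≤ (c ^ 2 + t ^ (n + 1) * bb ^ 2) ^ 2 := by
    intro n
    obtain ⟨-, hlt⟩ := hucone n
    have hip : (inner ℝ θ (u (n + 1)) : ℝ) = lam ^ (n + 1) * c ^ 2 + mu ^ (n + 1) * bb ^ 2 := by
      simp only [hudef]
      rw [hθd, inner_combo v w hv hwn hvw]
      ring
    have hnp : ‖u (n + 1)‖ ^ 2 = (lam ^ (n + 1) * c) ^ 2 + (mu ^ (n + 1) * bb) ^ 2 := by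
      simp only [hudef]
      exact norm_combo v w hv hwn hvw _ _
    rw [hip] at hlt
    have h1 : Real.cos (β / 2) * ‖u (n + 1)‖
        ≤ |lam ^ (n + 1) * c ^ 2 + mu ^ (n + 1) * bb ^ 2| := hlt.le
    have h3 := mul_self_le_mul_self (by positivity) h1
    rw [abs_mul_abs_self] at h3
    have hsq : Real.cos (β / 2) ^ 2 * ((lam ^ (n + 1) * c) ^ 2 + (mu ^ (n + 1) * bb) ^ 2)
        ≤ (lam ^ (n + 1) * c ^ 2 + mu ^ (n + 1) * bb ^ 2) ^ 2 := by
      calc Real.cos (β / 2) ^ 2 * ((lam ^ (n + 1) * c) ^ 2 + (mu ^ (n + 1) * bb) ^ 2)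
          = (Real.cos (β / 2) * ‖u (n + 1)‖) * (Real.cos (β / 2) * ‖u (n + 1)‖) := by
            rw [← hnp]; ring
        _ ≤ (lam ^ (n + 1) * c ^ 2 + mu ^ (n + 1) * bb ^ 2)
            * (lam ^ (n + 1) * c ^ 2 + mu ^ (n + 1) * bb ^ 2) := h3
        _ = (lam ^ (n + 1) * c ^ 2 + mu ^ (n + 1) * bb ^ 2) ^ 2 := by ring
    rw [hmut] at hsq
    have hlp : (0 : ℝ) < (lam ^ (n + 1)) ^ 2 := by positivity
    have e1 : Real.cos (β / 2) ^ 2 * ((lam ^ (n + 1) * c) ^ 2 + ((t * lam) ^ (n + 1) * bb) ^ 2)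
        = (lam ^ (n + 1)) ^ 2 * (Real.cos (β / 2) ^ 2 * (c ^ 2 + (t ^ (n + 1)) ^ 2 * bb ^ 2)) := by
      ring
    have e2 : (lam ^ (n + 1) * c ^ 2 + (t * lam) ^ (n + 1) * bb ^ 2) ^ 2
        = (lam ^ (n + 1)) ^ 2 * ((c ^ 2 + t ^ (n + 1) * bb ^ 2) ^ 2) := by ring
    rw [e1, e2] at hsq
    exact le_of_mul_le_mul_left hsq hlp
  have hcge : Real.cos (β / 2) ≤ |c| := by
    have hlim : Tendsto (fun n : ℕ => t ^ (n + 1)) atTop (nhds 0) :=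
      (tendsto_pow_atTop_nhds_zero_of_lt_one ht0 ht1).comp (tendsto_add_atTop_nat 1)
    set F : ℝ → ℝ := fun s => (c ^ 2 + s * bb ^ 2) ^ 2
      - Real.cos (β / 2) ^ 2 * (c ^ 2 + s ^ 2 * bb ^ 2) with hFdef
    have hFc : Continuous F := by
      rw [hFdef]; fun_prop
    have hF0 : 0 ≤ F 0 := by
      refine ge_of_tendsto' ((hFc.tendsto 0).comp hlim) ?_
      intro n
      simp only [Function.comp, hFdef]
      linarith [key n]
    have h4 : Real.cos (β / 2) ^ 2 ≤ c ^ 2 := by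
      have hF0' : 0 ≤ (c ^ 2) ^ 2 - Real.cos (β / 2) ^ 2 * c ^ 2 := by
        have hFeq : F 0 = (c ^ 2) ^ 2 - Real.cos (β / 2) ^ 2 * c ^ 2 := by
          simp only [hFdef]; ring
        rw [hFeq] at hF0; exact hF0
      have hc2 : 0 < c ^ 2 := by positivity
      by_contra hcon
      push_neg at hcon
      have h8 : c ^ 2 * c ^ 2 < Real.cos (β / 2) ^ 2 * c ^ 2 :=
        mul_lt_mul_of_pos_right hcon hc2
      linarith
    calc Real.cos (β / 2) = Real.sqrt (Real.cos (β / 2) ^ 2) := (Real.sqrt_sq hcb0.le).symm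
      _ ≤ Real.sqrt (c ^ 2) := Real.sqrt_le_sqrt h4
      _ = |c| := Real.sqrt_sq_eq_abs c
  -- the unoriented angle between v and x is less than β
  obtain ⟨hxne, hxineq⟩ := hx
  have hxn : 0 < ‖x‖ := norm_pos_iff.2 hxne
  have hvθ : (inner ℝ θ v : ℝ) = c := by rw [hcdef]; exact real_inner_comm v θ
  have hvdec : v = c • θ + (inner ℝ (perpA θ) v : ℝ) • perpA θ := by
    have h := decomp2 θ hθ v
    rwa [hvθ] at h
  set d := (inner ℝ (perpA θ) v : ℝ) with hddef
  set x1 := (inner ℝ θ x : ℝ) with hx1def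
  set x2 := (inner ℝ (perpA θ) x : ℝ) with hx2def
  have hvxeq : (inner ℝ v x : ℝ) = c * x1 + d * x2 := by
    calc (inner ℝ v x : ℝ) = (inner ℝ (c • θ + d • perpA θ) x : ℝ) := by rw [← hvdec]
      _ = c * x1 + d * x2 := by
          rw [inner_add_left, real_inner_smul_left, real_inner_smul_left]
  have hx12 : x1 ^ 2 + x2 ^ 2 = ‖x‖ ^ 2 := by
    have hl := lagrange2 θ x
    rw [hθ] at hl
    have h2 : x2 = θ 0 * x 1 - θ 1 * x 0 := by rw [hx2def, inner2, perp0, perp1]; ring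
    rw [h2, hx1def]
    linarith [hl]
  have hcd : c ^ 2 + d ^ 2 = 1 := by
    have hl := lagrange2 θ v
    rw [hθ, hv] at hl
    have h2 : d = θ 0 * v 1 - θ 1 * v 0 := by rw [hddef, inner2, perp0, perp1]; ring
    rw [← hvθ, h2]
    linarith [hl]
  have hc2ge : Real.cos (β / 2) ^ 2 ≤ c ^ 2 := by
    have h := mul_self_le_mul_self hcb0.le hcge
    rw [abs_mul_abs_self] at h
    calc Real.cos (β / 2) ^ 2 = Real.cos (β / 2) * Real.cos (β / 2) := by ring
      _ ≤ c * c := h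
      _ = c ^ 2 := by ring
  have hdabs : |d| ≤ Real.sin (β / 2) := by
    apply absle _ _ _ hsb0.le
    have hsin : Real.sin (β / 2) ^ 2 = 1 - Real.cos (β / 2) ^ 2 := Real.sin_sq (β / 2)
    linarith
  have hx1abs : Real.cos (β / 2) * ‖x‖ ≤ |x1| := hxineq.le
  have hx2abs : |x2| ≤ Real.sin (β / 2) * ‖x‖ := by
    apply absle _ _ _ (by positivity)
    have h5 : Real.cos (β / 2) ^ 2 * ‖x‖ ^ 2 ≤ x1 ^ 2 := by
      have h := mul_self_le_mul_self (mul_nonneg hcb0.le hxn.le) hx1abs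
      rw [abs_mul_abs_self] at h
      calc Real.cos (β / 2) ^ 2 * ‖x‖ ^ 2
          = (Real.cos (β / 2) * ‖x‖) * (Real.cos (β / 2) * ‖x‖) := by ring
        _ ≤ x1 * x1 := h
        _ = x1 ^ 2 := by ring
    have hsin : Real.sin (β / 2) ^ 2 = 1 - Real.cos (β / 2) ^ 2 := Real.sin_sq (β / 2)
    have h6 : Real.sin (β / 2) ^ 2 * ‖x‖ ^ 2 = ‖x‖ ^ 2 - Real.cos (β / 2) ^ 2 * ‖x‖ ^ 2 := by
      linear_combination ‖x‖ ^ 2 * hsin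
    linarith [hx12, h5, h6]
  have hcosd : Real.cos β = 2 * Real.cos (β / 2) ^ 2 - 1 := by
    have h := Real.cos_two_mul (β / 2)
    rw [show 2 * (β / 2) = β by ring] at h
    exact h
  have hvx : Real.cos β * ‖x‖ ≤ |(inner ℝ v x : ℝ)| := by
    have habs : |c| * |x1| - |d| * |x2| ≤ |c * x1 + d * x2| := by
      have h := abs_add_le (c * x1 + d * x2) (-(d * x2))
      rw [add_neg_cancel_right, abs_neg, abs_mul, abs_mul] at h
      linarith [h]
    have h1 : Real.cos (β / 2) * (Real.cos (β / 2) * ‖x‖) ≤ |c| * |x1| :=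
      mul_le_mul hcge hx1abs (by positivity) (abs_nonneg c)
    have h2 : |d| * |x2| ≤ Real.sin (β / 2) * (Real.sin (β / 2) * ‖x‖) :=
      mul_le_mul hdabs hx2abs (abs_nonneg x2) hsb0.le
    have hsin : Real.sin (β / 2) ^ 2 = 1 - Real.cos (β / 2) ^ 2 := Real.sin_sq (β / 2)
    have h6 : Real.sin (β / 2) * (Real.sin (β / 2) * ‖x‖)
        = (1 - Real.cos (β / 2) ^ 2) * ‖x‖ := by
      linear_combination ‖x‖ * hsin
    have h7 : Real.cos β * ‖x‖ = 2 * (Real.cos (β / 2) * (Real.cos (β / 2) * ‖x‖)) - ‖x‖ := by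
      linear_combination ‖x‖ * hcosd
    rw [hvxeq]
    linarith [habs, h1, h2, h6, h7]
  -- final computation
  set c' := (inner ℝ v x : ℝ) with hc'def
  set s' := (inner ℝ w x : ℝ) with hs'def
  have hxd : x = c' • v + s' • w := hdec x
  have hs'c : c' ^ 2 + s' ^ 2 = ‖x‖ ^ 2 := by
    have hl := lagrange2 v x
    rw [hv] at hl
    have h2 : s' = v 0 * x 1 - v 1 * x 0 := by rw [hs'def, hwdef, inner2, perp0, perp1]; ring
    rw [hc'def, h2]
    linarith [hl]
  have hc'ge : Real.cos β * ‖x‖ ≤ |c'| := hvx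
  have hc'pos : 0 < |c'| := lt_of_lt_of_le (by positivity) hc'ge
  have hc'ne : c' ≠ 0 := by
    intro h; rw [h, abs_zero] at hc'pos; exact lt_irrefl _ hc'pos
  have hTx : Matrix.toEuclideanLin B x
      = c' • Matrix.toEuclideanLin B v + s' • Matrix.toEuclideanLin B w := by
    calc Matrix.toEuclideanLin B x = Matrix.toEuclideanLin B (c' • v + s' • w) := by rw [← hxd]
      _ = _ := by rw [map_add, _root_.map_smul, _root_.map_smul]
  have hipTx : (inner ℝ (Matrix.toEuclideanLin B v) (Matrix.toEuclideanLin B x) : ℝ)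
      = c' * lam := by
    rw [hTx, inner_add_right, real_inner_smul_right, real_inner_smul_right,
      real_inner_self_eq_norm_sq, hTv2, hTvTw]
    ring
  have hnTx : ‖Matrix.toEuclideanLin B x‖ ^ 2 = c' ^ 2 * lam + s' ^ 2 * mu := by
    rw [hTx, ← real_inner_self_eq_norm_sq]
    simp only [inner_add_left, inner_add_right, real_inner_smul_left, real_inner_smul_right]
    rw [real_inner_self_eq_norm_sq, real_inner_self_eq_norm_sq, hTv2, ← hmu, hTvTw, hTwTv]
    ring
  have hTxpos : 0 < ‖Matrix.toEuclideanLin B x‖ := by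
    rcases (norm_nonneg (Matrix.toEuclideanLin B x)).lt_or_eq with h | h
    · exact h
    · exfalso
      rw [← h] at hnTx
      have hcl : 0 < c' ^ 2 * lam := by positivity
      linarith [hnTx, hcl, mul_nonneg (sq_nonneg s') hmu0.le]
  have hTvn : ‖Matrix.toEuclideanLin B v‖ = a1 B := by
    rw [show ‖Matrix.toEuclideanLin B v‖ = Real.sqrt (‖Matrix.toEuclideanLin B v‖ ^ 2) from
      (Real.sqrt_sq (norm_nonneg _)).symm, hTv2, hlam, Real.sqrt_sq ha1nn]
  set u0 := |c'| * a1 B / ‖Matrix.toEuclideanLin B x‖ with hu0def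
  have hu0eq : |(inner ℝ (Matrix.toEuclideanLin B v) (Matrix.toEuclideanLin B x) : ℝ)| /
      (‖Matrix.toEuclideanLin B v‖ * ‖Matrix.toEuclideanLin B x‖) = u0 := by
    rw [hipTx, hTvn, abs_mul, abs_of_pos hlam0, hu0def, hlam]
    rw [div_eq_div_iff (by positivity) (by positivity)]
    ring
  have hu0pos : 0 < u0 := by rw [hu0def]; positivity
  have hu0le : u0 ≤ 1 := by
    rw [hu0def, div_le_one hTxpos]
    have hsq : (|c'| * a1 B) ^ 2 ≤ ‖Matrix.toEuclideanLin B x‖ ^ 2 := by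
      rw [hnTx, mul_pow, sq_abs, ← hlam]
      linarith [mul_nonneg (sq_nonneg s') hmu0.le]
    calc |c'| * a1 B = Real.sqrt ((|c'| * a1 B) ^ 2) := (Real.sqrt_sq (by positivity)).symm
      _ ≤ Real.sqrt (‖Matrix.toEuclideanLin B x‖ ^ 2) := Real.sqrt_le_sqrt hsq
      _ = ‖Matrix.toEuclideanLin B x‖ := Real.sqrt_sq hTxpos.le
  have harc := arccos_le_aux hu0pos hu0le
  have hsq1 : u0 ^ 2 = c' ^ 2 * lam / ‖Matrix.toEuclideanLin B x‖ ^ 2 := by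
    rw [hu0def, div_pow, mul_pow, sq_abs, ← hlam]
  have hsq2 : (|s'| * a2 B / ‖Matrix.toEuclideanLin B x‖) ^ 2
      = s' ^ 2 * mu / ‖Matrix.toEuclideanLin B x‖ ^ 2 := by
    rw [div_pow, mul_pow, sq_abs, ha2sq]
  have h1mu : 1 - u0 ^ 2 = (|s'| * a2 B / ‖Matrix.toEuclideanLin B x‖) ^ 2 := by
    rw [hsq1, hsq2]
    have hT2 : (‖Matrix.toEuclideanLin B x‖ ^ 2) ≠ 0 := by positivity
    field_simp
    linear_combination hnTx
  have hsqrt : Real.sqrt (1 - u0 ^ 2) = |s'| * a2 B / ‖Matrix.toEuclideanLin B x‖ := by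
    rw [h1mu, Real.sqrt_sq (by positivity)]
  have htan : Real.sqrt (1 - u0 ^ 2) / u0 = |s'| * a2 B / (|c'| * a1 B) := by
    rw [hsqrt, hu0def]
    rw [div_div_div_eq]
    rw [div_eq_div_iff (by positivity) (by positivity)]
    ring
  have hfin : |s'| * a2 B / (|c'| * a1 B) ≤ π / (2 * Real.cos β) * (a2 B / a1 B) := by
    rw [div_mul_div_comm, div_le_div_iff₀ (by positivity) (by positivity)]
    have hs'le : |s'| ≤ ‖x‖ := absle _ _ (by linarith [hs'c, sq_nonneg c']) hxn.le
    have h2c : 2 * (Real.cos β * |s'|) ≤ π * |c'| := by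
      have ha : Real.cos β * |s'| ≤ Real.cos β * ‖x‖ := mul_le_mul_of_nonneg_left hs'le hcβ.le
      have h9 : 0 ≤ (π - 2) * |c'| := mul_nonneg (by linarith) (abs_nonneg c')
      linarith [ha, hc'ge, h9]
    have h3 := mul_le_mul_of_nonneg_left h2c (mul_nonneg ha2n ha1.le)
    linarith [h3]
  show Real.arccos (|(inner ℝ (Matrix.toEuclideanLin B v) (Matrix.toEuclideanLin B x) : ℝ)| /
      (‖Matrix.toEuclideanLin B v‖ * ‖Matrix.toEuclideanLin B x‖))
      ≤ π / (2 * Real.cos β) * (a2 B / a1 B)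
  rw [hu0eq]
  calc Real.arccos u0 ≤ Real.sqrt (1 - u0 ^ 2) / u0 := harc
    _ = |s'| * a2 B / (|c'| * a1 B) := htan
    _ ≤ π / (2 * Real.cos β) * (a2 B / a1 B) := hfin

end
end

section
/- Let I = {1,…,κ} with κ ≥ 2, and for each i ∈ I let A_i ∈ ℝ^{2×2} be invertible with ‖A_i‖ < 1. Suppose there exist θ ∈ S¹ and 0 < β < π/2 such that A_i(cl X(θ,β)) ⊂ X(θ,β) and A_iᵀ(cl X(θ,β)) ⊂ X(θ,β) for every i ∈ I, and moreover A_i(cl X(θ,β)) ∩ A_j(cl X(θ,β)) = {0} for i ≠ j. Then there exists a constant c > 0 such that for all incomparable finite words 𝚒, 𝚓 (neither is a prefix of the other) and all x, y ∈ X(θ,β), the unoriented angle between the line spanned by A_𝚒 x and the line spanned by A_𝚓 y is at least c·α₂(A_{𝚒∧𝚓})/α₁(A_{𝚒∧𝚓}), where 𝚒∧𝚓 denotes the longest common prefix of 𝚒 and 𝚓 (with A_∅ the identity matrix). -/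
open MeasureTheory Filter Matrix Real Set

noncomputable section

/-- the longest common prefix of two words -/
def lcp {κ : ℕ} : List (Fin κ) → List (Fin κ) → List (Fin κ)
  | a :: as, b :: bs => if a = b then a :: lcp as bs else []
  | _, _ => []

def cr (u v : E2) : ℝ := u 0 * v 1 - u 1 * v 0

lemma inner_E2 (u v : E2) : (inner ℝ u v : ℝ) = u 0 * v 0 + u 1 * v 1 := by
  simp [PiLp.inner_apply, Fin.sum_univ_two, RCLike.inner_apply]; ring

lemma normsq_E2 (u : E2) : ‖u‖^2 = u 0^2 + u 1^2 := by
  rw [EuclideanSpace.norm_eq, Real.sq_sqrt (by positivity)]; simp [Fin.sum_univ_two, sq_abs]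

lemma lagrange (u v : E2) : (inner ℝ u v : ℝ)^2 + (cr u v)^2 = ‖u‖^2 * ‖v‖^2 := by
  rw [inner_E2, normsq_E2, normsq_E2, cr]; ring

lemma teL_apply (M : Matrix (Fin 2) (Fin 2) ℝ) (v : E2) (i : Fin 2) :
    Matrix.toEuclideanLin M v i = M i 0 * v 0 + M i 1 * v 1 := by
  fin_cases i <;> simp [Matrix.toEuclideanLin_apply, Matrix.mulVec, dotProduct, Fin.sum_univ_two]

lemma cr_map (M : Matrix (Fin 2) (Fin 2) ℝ) (u v : E2) :
    cr (Matrix.toEuclideanLin M u) (Matrix.toEuclideanLin M v) = M.det * cr u v := by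
  simp [cr, teL_apply, Matrix.det_fin_two]; ring

lemma norm_map_le (M : Matrix (Fin 2) (Fin 2) ℝ) (u : E2) :
    ‖Matrix.toEuclideanLin M u‖ ≤ a1 M * ‖u‖ := (mLin M).le_opNorm u

lemma sin_uangle (u v : E2) (hu : u ≠ 0) (hv : v ≠ 0) :
    Real.sin (uangle u v) = |cr u v| / (‖u‖ * ‖v‖) := by
  have hun : (0:ℝ) < ‖u‖ := norm_pos_iff.2 hu
  have hvn : (0:ℝ) < ‖v‖ := norm_pos_iff.2 hv
  have hp : (0:ℝ) < ‖u‖ * ‖v‖ := mul_pos hun hvn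
  rw [uangle, Real.sin_arccos]
  have hN2 : ((‖u‖ * ‖v‖)^2) ≠ 0 := pow_ne_zero _ hp.ne'
  have heq : 1 - (|(inner ℝ u v : ℝ)| / (‖u‖ * ‖v‖))^2 = (cr u v)^2 / (‖u‖ * ‖v‖)^2 := by
    rw [eq_div_iff hN2, sub_mul, one_mul, div_pow, sq_abs, div_mul_cancel₀ _ hN2, mul_pow]
    linarith [lagrange u v]
  rw [heq, Real.sqrt_div (sq_nonneg _), Real.sqrt_sq_eq_abs, Real.sqrt_sq hp.le]

lemma teL_mul (M N : Matrix (Fin 2) (Fin 2) ℝ) (v : E2) :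
    Matrix.toEuclideanLin (M * N) v = Matrix.toEuclideanLin M (Matrix.toEuclideanLin N v) := by
  simp [Matrix.toEuclideanLin_eq_toLin, Matrix.toLin_mul _ (PiLp.basisFun 2 ℝ (Fin 2))]

lemma teL_one (v : E2) : Matrix.toEuclideanLin (1 : Matrix (Fin 2) (Fin 2) ℝ) v = v := by
  simp [Matrix.toEuclideanLin_eq_toLin]

lemma teL_injective (M : Matrix (Fin 2) (Fin 2) ℝ) (h : IsUnit M.det) :
    Function.Injective (Matrix.toEuclideanLin M) := by
  intro x y hxy
  have h1 : Matrix.toEuclideanLin (M⁻¹ * M) x = Matrix.toEuclideanLin (M⁻¹ * M) y := by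
    rw [teL_mul, teL_mul, hxy]
  rwa [Matrix.nonsing_inv_mul M h, teL_one, teL_one] at h1

lemma teL_ne_zero (M : Matrix (Fin 2) (Fin 2) ℝ) (h : IsUnit M.det) {x : E2} (hx : x ≠ 0) :
    Matrix.toEuclideanLin M x ≠ 0 := by
  intro h0
  exact hx (teL_injective M h (by rw [h0, map_zero]))

lemma a1_pos (M : Matrix (Fin 2) (Fin 2) ℝ) (h : IsUnit M.det) : 0 < a1 M := by
  rw [a1, norm_pos_iff]
  intro h0
  have hx : (EuclideanSpace.single (0 : Fin 2) (1:ℝ)) ≠ 0 := by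
    intro hc
    have := congrFun (congrArg (WithLp.equiv 2 (Fin 2 → ℝ)) hc) 0
    simp at this
  apply teL_ne_zero M h hx
  have : mLin M (EuclideanSpace.single (0 : Fin 2) (1:ℝ)) = 0 := by rw [h0]; rfl
  exact this

lemma uangle_nonneg (u v : E2) : 0 ≤ uangle u v := Real.arccos_nonneg _

lemma uangle_le (u v : E2) : uangle u v ≤ π / 2 :=
  Real.arccos_le_pi_div_two.2 (by positivity)

lemma distort (M : Matrix (Fin 2) (Fin 2) ℝ) (hM : IsUnit M.det) (u v : E2)
    (hu : u ≠ 0) (hv : v ≠ 0) :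
    a2 M / a1 M * Real.sin (uangle u v) ≤
      uangle (Matrix.toEuclideanLin M u) (Matrix.toEuclideanLin M v) := by
  set U := Matrix.toEuclideanLin M u with hU
  set V := Matrix.toEuclideanLin M v with hV
  have hU0 : U ≠ 0 := teL_ne_zero M hM hu
  have hV0 : V ≠ 0 := teL_ne_zero M hM hv
  have ha1 : 0 < a1 M := a1_pos M hM
  have hun : (0:ℝ) < ‖u‖ := norm_pos_iff.2 hu
  have hvn : (0:ℝ) < ‖v‖ := norm_pos_iff.2 hv
  have hUn : (0:ℝ) < ‖U‖ := norm_pos_iff.2 hU0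
  have hVn : (0:ℝ) < ‖V‖ := norm_pos_iff.2 hV0
  have h1 : Real.sin (uangle U V) ≤ uangle U V := Real.sin_le (uangle_nonneg U V)
  have h2 : Real.sin (uangle U V) = |M.det| * |cr u v| / (‖U‖ * ‖V‖) := by
    rw [sin_uangle U V hU0 hV0, hU, hV, cr_map, abs_mul]
  have h3 : |M.det| * |cr u v| / (a1 M * ‖u‖ * (a1 M * ‖v‖)) ≤
      |M.det| * |cr u v| / (‖U‖ * ‖V‖) := by
    have hd : ‖U‖ * ‖V‖ ≤ a1 M * ‖u‖ * (a1 M * ‖v‖) :=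
      mul_le_mul (norm_map_le M u) (norm_map_le M v) hVn.le (by positivity)
    exact div_le_div_of_nonneg_left (by positivity) (mul_pos hUn hVn) hd
  have h4 : |M.det| * |cr u v| / (a1 M * ‖u‖ * (a1 M * ‖v‖)) =
      a2 M / a1 M * (|cr u v| / (‖u‖ * ‖v‖)) := by
    rw [a2]; field_simp
  rw [sin_uangle u v hu hv, ← h4]
  calc |M.det| * |cr u v| / (a1 M * ‖u‖ * (a1 M * ‖v‖)) ≤ _ := h3
    _ = Real.sin (uangle U V) := h2.symm
    _ ≤ uangle U V := h1

lemma uangle_smul_left (c : ℝ) (hc : c ≠ 0) (u v : E2) : uangle (c • u) v = uangle u v := by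
  unfold uangle
  rw [real_inner_smul_left, norm_smul, abs_mul, Real.norm_eq_abs, mul_assoc,
    mul_div_mul_left _ _ (abs_ne_zero.2 hc)]

lemma uangle_comm (u v : E2) : uangle u v = uangle v u := by
  unfold uangle
  rw [real_inner_comm, mul_comm]

lemma cone_smul (θ : E2) (β : ℝ) (c : ℝ) (hc : c ≠ 0) {x : E2} (hx : x ∈ cone θ β) :
    c • x ∈ cone θ β := by
  obtain ⟨hx0, hxlt⟩ := hx
  refine ⟨smul_ne_zero hc hx0, ?_⟩
  rw [real_inner_smul_right, norm_smul, Real.norm_eq_abs, abs_mul]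
  rw [show Real.cos (β/2) * (|c| * ‖x‖) = |c| * (Real.cos (β/2) * ‖x‖) by ring]
  exact (mul_lt_mul_iff_right₀ (abs_pos.2 hc)).2 hxlt

lemma closure_cone_smul (θ : E2) (β : ℝ) (c : ℝ) (hc : c ≠ 0) {x : E2}
    (hx : x ∈ closure (cone θ β)) : c • x ∈ closure (cone θ β) := by
  have hm : Set.MapsTo (fun y : E2 => c • y) (cone θ β) (cone θ β) :=
    fun y hy => cone_smul θ β c hc hy
  exact hm.closure (continuous_const_smul c) hx

lemma theta_mem_cone (θ : E2) (hθ : ‖θ‖ = 1) (β : ℝ) (hβ : 0 < β) (hβ' : β < π / 2) :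
    θ ∈ cone θ β := by
  refine ⟨fun h => by simp [h] at hθ, ?_⟩
  have h1 : (inner ℝ θ θ : ℝ) = 1 := by
    rw [real_inner_self_eq_norm_sq, hθ]; norm_num
  rw [h1, hθ, mul_one, abs_one]
  calc Real.cos (β/2) < Real.cos 0 :=
        Real.cos_lt_cos_of_nonneg_of_le_pi le_rfl (by linarith [Real.pi_pos]) (by linarith)
    _ = 1 := Real.cos_zero
  -- done

lemma image_closed (M : Matrix (Fin 2) (Fin 2) ℝ) (h : IsUnit M.det) (s : Set E2)
    (hs : IsClosed s) : IsClosed (Matrix.toEuclideanLin M '' s) := by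
  have hker : LinearMap.ker (Matrix.toEuclideanLin M) = ⊥ :=
    LinearMap.ker_eq_bot.2 (teL_injective M h)
  exact (LinearMap.isClosedEmbedding_of_injective hker).isClosedMap _ hs

lemma exists_delta (κ : ℕ) (hκ : 2 ≤ κ) (A : Fin κ → Matrix (Fin 2) (Fin 2) ℝ)
    (hinv : ∀ i, IsUnit (A i).det)
    (θ : E2) (hθ : ‖θ‖ = 1) (β : ℝ) (hβ : 0 < β) (hβ' : β < π / 2)
    (hK1c : ∀ i j, i ≠ j →
      (Matrix.toEuclideanLin (A i) '' closure (cone θ β)) ∩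
        (Matrix.toEuclideanLin (A j) '' closure (cone θ β)) = {0}) :
    ∃ δ : ℝ, 0 < δ ∧ δ ≤ π / 2 ∧ ∀ i j, i ≠ j →
      ∀ u ∈ Matrix.toEuclideanLin (A i) '' closure (cone θ β),
      ∀ v ∈ Matrix.toEuclideanLin (A j) '' closure (cone θ β),
      u ≠ 0 → v ≠ 0 → δ ≤ uangle u v := by
  set C := closure (cone θ β) with hC
  -- the image sets
  set G : Fin κ → Set E2 := fun i => Matrix.toEuclideanLin (A i) '' C with hG
  have hGsmul : ∀ i (c : ℝ), c ≠ 0 → ∀ u ∈ G i, c • u ∈ G i := by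
    rintro i c hc u ⟨z, hz, rfl⟩
    exact ⟨c • z, closure_cone_smul θ β c hc hz, map_smul _ _ _⟩
  set K : Fin κ → Set E2 := fun i => G i ∩ Metric.sphere 0 1 with hK
  have hKcpt : ∀ i, IsCompact (K i) := by
    intro i
    exact (isCompact_sphere (0:E2) 1).inter_left (image_closed _ (hinv i) _ isClosed_closure)
  have hθ0 : θ ≠ 0 := fun h => by simp [h] at hθ
  have hθC : θ ∈ C := subset_closure (theta_mem_cone θ hθ β hβ hβ')
  -- normalization into K
  have hnormK : ∀ i, ∀ u ∈ G i, u ≠ 0 → (‖u‖⁻¹ • u) ∈ K i := by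
    intro i u hu hu0
    refine ⟨hGsmul i _ (inv_ne_zero (norm_ne_zero_iff.2 hu0)) u hu, ?_⟩
    rw [mem_sphere_zero_iff_norm]
    exact norm_smul_inv_norm (𝕜 := ℝ) hu0
  have hKne : ∀ i, (K i).Nonempty := by
    intro i
    have hw : Matrix.toEuclideanLin (A i) θ ∈ G i := ⟨θ, hθC, rfl⟩
    have hw0 : Matrix.toEuclideanLin (A i) θ ≠ 0 := teL_ne_zero _ (hinv i) hθ0
    exact ⟨_, hnormK i _ hw hw0⟩
  -- members of K i are nonzero
  have hKne0 : ∀ i, ∀ u ∈ K i, u ≠ 0 := by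
    rintro i u ⟨-, hu⟩ rfl
    rw [mem_sphere_zero_iff_norm] at hu; simp at hu
  -- the big compact set of pairs
  classical
  set S : Fin κ × Fin κ → Set (E2 × E2) :=
    fun p => if p.1 ≠ p.2 then K p.1 ×ˢ K p.2 else ∅ with hS
  set T : Set (E2 × E2) := ⋃ p, S p with hT
  have hTcpt : IsCompact T := by
    apply isCompact_iUnion
    intro p
    simp only [hS]
    split
    · exact (hKcpt p.1).prod (hKcpt p.2)
    · exact isCompact_empty
  set i0 : Fin κ := ⟨0, by omega⟩ with hi0
  set i1 : Fin κ := ⟨1, by omega⟩ with hi1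
  have h01 : i0 ≠ i1 := by
    intro h
    have := congrArg Fin.val h
    simp [hi0, hi1] at this
  have hTne : T.Nonempty := by
    obtain ⟨u, hu⟩ := hKne i0
    obtain ⟨v, hv⟩ := hKne i1
    exact ⟨(u, v), Set.mem_iUnion.2 ⟨(i0,i1), by
      simp only [hS]; rw [if_pos h01]; exact ⟨hu, hv⟩⟩⟩
  -- continuity
  have hcont : ContinuousOn (fun p : E2 × E2 => uangle p.1 p.2) T := by
    apply ContinuousOn.comp (Real.continuous_arccos.continuousOn)
    · apply ContinuousOn.div
      · exact (continuous_abs.comp (continuous_inner (𝕜 := ℝ))).continuousOn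
      · exact ((continuous_norm.comp continuous_fst).mul
          (continuous_norm.comp continuous_snd)).continuousOn
      · rintro ⟨u, v⟩ hp
        obtain ⟨q, hq⟩ := Set.mem_iUnion.1 hp
        simp only [hS] at hq
        split at hq
        · obtain ⟨hu, hv⟩ := hq
          have hu1 : ‖u‖ = 1 := mem_sphere_zero_iff_norm.1 hu.2
          have hv1 : ‖v‖ = 1 := mem_sphere_zero_iff_norm.1 hv.2
          show ‖u‖ * ‖v‖ ≠ 0
          rw [hu1, hv1]; norm_num
        · exact absurd hq (Set.notMem_empty _)
    · exact Set.mapsTo_univ _ _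
  obtain ⟨p0, hp0, hmin'⟩ := hTcpt.exists_isMinOn hTne hcont
  have hmin : ∀ p ∈ T, uangle p0.1 p0.2 ≤ uangle p.1 p.2 := fun p hp => hmin' hp
  refine ⟨uangle p0.1 p0.2, ?_, uangle_le _ _, ?_⟩
  · -- positivity
    obtain ⟨q, hq⟩ := Set.mem_iUnion.1 hp0
    simp only [hS] at hq
    split at hq
    case isTrue hne =>
      obtain ⟨hu, hv⟩ := hq
      have hu1 : ‖p0.1‖ = 1 := mem_sphere_zero_iff_norm.1 hu.2
      have hv1 : ‖p0.2‖ = 1 := mem_sphere_zero_iff_norm.1 hv.2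
      rw [uangle, Real.arccos_pos, hu1, hv1, one_mul, div_one]
      rcases lt_or_ge (|(inner ℝ p0.1 p0.2 : ℝ)|) 1 with h | h
      · exact h
      · exfalso
        have hcs : |(inner ℝ p0.1 p0.2 : ℝ)| ≤ 1 := by
          have := abs_real_inner_le_norm p0.1 p0.2
          rwa [hu1, hv1, mul_one] at this
        have heq : |(inner ℝ p0.1 p0.2 : ℝ)| = 1 := le_antisymm hcs h
        -- then p0.2 = ± p0.1, contradiction with separation
        have hpm : p0.2 = p0.1 ∨ p0.2 = -p0.1 := by
          rcases abs_eq (by norm_num : (0:ℝ) ≤ 1) |>.1 heq with h1 | h1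
          · left
            have : (inner ℝ p0.1 p0.2 : ℝ) = ‖p0.1‖ * ‖p0.2‖ := by rw [hu1, hv1]; simpa using h1
            have := inner_eq_norm_mul_iff_real.1 this
            rw [hu1, hv1, one_smul, one_smul] at this
            exact this.symm
          · right
            have : (inner ℝ p0.1 (-p0.2) : ℝ) = ‖p0.1‖ * ‖-p0.2‖ := by
              rw [inner_neg_right, hu1, norm_neg, hv1, h1]; norm_num
            have := inner_eq_norm_mul_iff_real.1 this
            rw [hu1, norm_neg, hv1, one_smul, one_smul] at this
            rw [this]; simp
        have hmem : p0.1 ∈ G q.1 ∩ G q.2 := by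
          refine ⟨hu.1, ?_⟩
          rcases hpm with h1 | h1
          · rw [← h1]; exact hv.1
          · have := hGsmul q.2 (-1) (by norm_num) p0.2 hv.1
            rw [h1] at this; simpa using this
        rw [hK1c q.1 q.2 hne] at hmem
        exact hKne0 q.1 p0.1 hu hmem
    case isFalse => exact absurd hq (Set.notMem_empty _)
  · -- the bound
    intro i j hij u hu v hv hu0 hv0
    have hu' := hnormK i u hu hu0
    have hv' := hnormK j v hv hv0
    have hmem : (‖u‖⁻¹ • u, ‖v‖⁻¹ • v) ∈ T :=
      Set.mem_iUnion.2 ⟨(i,j), by simp only [hS]; rw [if_pos hij]; exact ⟨hu', hv'⟩⟩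
    have hle := hmin _ hmem
    rwa [uangle_smul_left _ (inv_ne_zero (norm_ne_zero_iff.2 hu0)) u (‖v‖⁻¹ • v),
      uangle_comm u (‖v‖⁻¹ • v),
      uangle_smul_left _ (inv_ne_zero (norm_ne_zero_iff.2 hv0)) v u,
      uangle_comm v u] at hle

lemma wprod_nil {κ : ℕ} (A : Fin κ → Matrix (Fin 2) (Fin 2) ℝ) : wprod A [] = 1 := rfl

lemma wprod_cons {κ : ℕ} (A : Fin κ → Matrix (Fin 2) (Fin 2) ℝ) (a : Fin κ) (l : List (Fin κ)) :
    wprod A (a :: l) = A a * wprod A l := by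
  simp [wprod]

lemma wprod_append {κ : ℕ} (A : Fin κ → Matrix (Fin 2) (Fin 2) ℝ) (l1 l2 : List (Fin κ)) :
    wprod A (l1 ++ l2) = wprod A l1 * wprod A l2 := by
  simp [wprod]

lemma wprod_det {κ : ℕ} (A : Fin κ → Matrix (Fin 2) (Fin 2) ℝ) (hinv : ∀ i, IsUnit (A i).det) :
    ∀ l, IsUnit (wprod A l).det := by
  intro l
  induction l with
  | nil => simp [wprod_nil]
  | cons a as ih => rw [wprod_cons, Matrix.det_mul]; exact (hinv a).mul ih

lemma lcp_decomp {κ : ℕ} : ∀ li lj : List (Fin κ), ¬ li <+: lj → ¬ lj <+: li →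
    ∃ (i j : Fin κ) (ti tj : List (Fin κ)), i ≠ j ∧
      li = lcp li lj ++ i :: ti ∧ lj = lcp li lj ++ j :: tj := by
  intro li
  induction li with
  | nil => intro lj h1 _; exact absurd (List.nil_prefix) h1
  | cons a as ih =>
    intro lj h1 h2
    cases lj with
    | nil => exact absurd (List.nil_prefix) h2
    | cons b bs =>
      by_cases hab : a = b
      · subst hab
        have h1' : ¬ as <+: bs := fun h => h1 (List.cons_prefix_cons.2 ⟨rfl, h⟩)
        have h2' : ¬ bs <+: as := fun h => h2 (List.cons_prefix_cons.2 ⟨rfl, h⟩)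
        obtain ⟨i, j, ti, tj, hij, e1, e2⟩ := ih bs h1' h2'
        refine ⟨i, j, ti, tj, hij, ?_, ?_⟩
        · show a :: as = lcp (a :: as) (a :: bs) ++ i :: ti
          rw [lcp, if_pos rfl, List.cons_append]
          exact congrArg (a :: ·) e1
        · show a :: bs = lcp (a :: as) (a :: bs) ++ j :: tj
          rw [lcp, if_pos rfl, List.cons_append]
          exact congrArg (a :: ·) e2
      · refine ⟨a, b, as, bs, hab, ?_, ?_⟩ <;> rw [lcp, if_neg hab, List.nil_append]

lemma mem_cone_word {κ : ℕ} (A : Fin κ → Matrix (Fin 2) (Fin 2) ℝ)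
    (θ : E2) (β : ℝ)
    (hK1a : ∀ i, ∀ x ∈ closure (cone θ β), x ≠ 0 → Matrix.toEuclideanLin (A i) x ∈ cone θ β) :
    ∀ l, ∀ x ∈ cone θ β, Matrix.toEuclideanLin (wprod A l) x ∈ cone θ β := by
  intro l
  induction l with
  | nil => intro x hx; rw [wprod_nil]; rwa [teL_one]
  | cons a as ih =>
    intro x hx
    rw [wprod_cons, teL_mul]
    exact hK1a a _ (subset_closure (ih x hx)) (ih x hx).1

/-- Lemma 4.3(ii): under (K1a), (K1b) and the separation condition (K1c), there is `c > 0`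
such that for all incomparable finite words `li, lj` and all `x, y ∈ X(θ,β)`, the unoriented
angle between `A_li x` and `A_lj y` is at least `c · α₂(A_{li∧lj})/α₁(A_{li∧lj})`. -/
theorem angle_between_cylinders (κ : ℕ) (hκ : 2 ≤ κ)
    (A : Fin κ → Matrix (Fin 2) (Fin 2) ℝ)
    (hinv : ∀ i, IsUnit (A i).det) (hnorm : ∀ i, a1 (A i) < 1)
    (θ : E2) (hθ : ‖θ‖ = 1) (β : ℝ) (hβ : 0 < β) (hβ' : β < π / 2)
    (hK1a : ∀ i, ∀ x ∈ closure (cone θ β), x ≠ 0 → Matrix.toEuclideanLin (A i) x ∈ cone θ β)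
    (hK1b : ∀ i, ∀ x ∈ closure (cone θ β), x ≠ 0 → Matrix.toEuclideanLin (A i)ᵀ x ∈ cone θ β)
    (hK1c : ∀ i j, i ≠ j →
      (Matrix.toEuclideanLin (A i) '' closure (cone θ β)) ∩
        (Matrix.toEuclideanLin (A j) '' closure (cone θ β)) = {0}) :
    ∃ c : ℝ, 0 < c ∧
      ∀ li lj : List (Fin κ), ¬ li <+: lj → ¬ lj <+: li →
        ∀ x ∈ cone θ β, ∀ y ∈ cone θ β,
          c * (a2 (wprod A (lcp li lj)) / a1 (wprod A (lcp li lj))) ≤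
            uangle (Matrix.toEuclideanLin (wprod A li) x)
              (Matrix.toEuclideanLin (wprod A lj) y) := by
  obtain ⟨δ, hδ0, hδπ, hδ⟩ := exists_delta κ hκ A hinv θ hθ β hβ hβ' hK1c
  refine ⟨Real.sin δ, Real.sin_pos_of_pos_of_lt_pi hδ0 (by linarith [Real.pi_pos]), ?_⟩
  intro li lj h1 h2 x hx y hy
  obtain ⟨i, j, ti, tj, hij, e1, e2⟩ := lcp_decomp li lj h1 h2
  set w := lcp li lj with hw
  set W := wprod A w with hW
  have hWdet : IsUnit W.det := wprod_det A hinv w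
  set u₀ := Matrix.toEuclideanLin (wprod A (i :: ti)) x with hu₀
  set v₀ := Matrix.toEuclideanLin (wprod A (j :: tj)) y with hv₀
  have hu₀c : u₀ ∈ cone θ β := mem_cone_word A θ β hK1a _ x hx
  have hv₀c : v₀ ∈ cone θ β := mem_cone_word A θ β hK1a _ y hy
  have hu₀0 : u₀ ≠ 0 := hu₀c.1
  have hv₀0 : v₀ ≠ 0 := hv₀c.1
  -- u₀ is in the image of closure cone under A i
  have hu₀G : u₀ ∈ Matrix.toEuclideanLin (A i) '' closure (cone θ β) := by
    refine ⟨Matrix.toEuclideanLin (wprod A ti) x,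
      subset_closure (mem_cone_word A θ β hK1a ti x hx), ?_⟩
    rw [hu₀, wprod_cons, teL_mul]
  have hv₀G : v₀ ∈ Matrix.toEuclideanLin (A j) '' closure (cone θ β) := by
    refine ⟨Matrix.toEuclideanLin (wprod A tj) y,
      subset_closure (mem_cone_word A θ β hK1a tj y hy), ?_⟩
    rw [hv₀, wprod_cons, teL_mul]
  have hang : δ ≤ uangle u₀ v₀ := hδ i j hij u₀ hu₀G v₀ hv₀G hu₀0 hv₀0
  have hsin : Real.sin δ ≤ Real.sin (uangle u₀ v₀) :=
    Real.sin_le_sin_of_le_of_le_pi_div_two (by linarith) (uangle_le u₀ v₀) hang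
  have hfrac : 0 ≤ a2 W / a1 W := by
    have := a1_pos W hWdet
    rw [a2]; positivity
  have hgoal1 : Matrix.toEuclideanLin (wprod A li) x = Matrix.toEuclideanLin W u₀ := by
    rw [e1, wprod_append, teL_mul, hu₀, hW]
  have hgoal2 : Matrix.toEuclideanLin (wprod A lj) y = Matrix.toEuclideanLin W v₀ := by
    rw [e2, wprod_append, teL_mul, hv₀, hW]
  rw [hgoal1, hgoal2]
  calc Real.sin δ * (a2 W / a1 W) = a2 W / a1 W * Real.sin δ := by ring
    _ ≤ a2 W / a1 W * Real.sin (uangle u₀ v₀) := by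
        exact mul_le_mul_of_nonneg_left hsin hfrac
    _ ≤ uangle (Matrix.toEuclideanLin W u₀) (Matrix.toEuclideanLin W v₀) :=
        distort W hWdet u₀ v₀ hu₀0 hv₀0


end
end
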